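/- arXiv:2505.18014 — 3 statements merged into one kernel-verified Lean document; each statement's English description precedes it below -/
import Mathlib

section
/- For every natural number $t \ge 0$ and every real number $x$, the following identity holds: $\sum_{i=0}^{t-1} 16^{t-i-1}\sum_{j=1}^{2^i} C_2\!\left(2^i x + j - 1\right) = 2^{4t}\left(\frac{x^2}{16} - \frac{x}{48} + \frac{1}{336}\right) - 2^{3t}\left(\frac{x^2}{16} + \frac{x}{16} + \frac{1}{48}\right) + 2^{2t}\left(\frac{x}{12} + \frac{1}{24}\right) - 2^{t}\,\frac{1}{42}$. -/
/-- Generalized binomial coefficient `C₂ y = y (y - 1) / 2`. -/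
noncomputable def C2 (y : ℝ) : ℝ := y * (y - 1) / 2

lemma sum_C2 (a : ℝ) (n : ℕ) :
    ∑ j ∈ Finset.Icc (1 : ℕ) n, C2 (a + (j : ℝ) - 1)
      = ((a + n) * (a + n - 1) * (a + n - 2) - a * (a - 1) * (a - 2)) / 6 := by
  induction n with
  | zero => simp
  | succ n ih =>
    rw [Finset.sum_Icc_succ_top (by omega), ih]
    push_cast
    unfold C2
    ring

/-- Closed form for `B₍₀,₁₎(x)`:
`∑_{i=0}^{t-1} 16^{t-i-1} ∑_{j=1}^{2^i} C₂(2^i x + j - 1)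
  = 2^{4t} (x²/16 - x/48 + 1/336) - 2^{3t} (x²/16 + x/16 + 1/48)
    + 2^{2t} (x/12 + 1/24) - 2^t / 42`. -/
theorem closed_form_B01 (t : ℕ) (x : ℝ) :
    ∑ i ∈ Finset.range t, (16 : ℝ) ^ (t - i - 1) *
        ∑ j ∈ Finset.Icc (1 : ℕ) (2 ^ i), C2 ((2 : ℝ) ^ i * x + (j : ℝ) - 1)
      = 2 ^ (4 * t) * (x ^ 2 / 16 - x / 48 + 1 / 336)
        - 2 ^ (3 * t) * (x ^ 2 / 16 + x / 16 + 1 / 48)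
        + 2 ^ (2 * t) * (x / 12 + 1 / 24) - 2 ^ t * (1 / 42) := by
  induction t with
  | zero => simp; ring
  | succ t ih =>
    rw [Finset.sum_range_succ]
    have h1 : ∀ i ∈ Finset.range t,
        (16 : ℝ) ^ (t + 1 - i - 1) *
          ∑ j ∈ Finset.Icc (1 : ℕ) (2 ^ i), C2 ((2 : ℝ) ^ i * x + (j : ℝ) - 1)
        = 16 * ((16 : ℝ) ^ (t - i - 1) *
          ∑ j ∈ Finset.Icc (1 : ℕ) (2 ^ i), C2 ((2 : ℝ) ^ i * x + (j : ℝ) - 1)) := by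
      intro i hi
      simp only [Finset.mem_range] at hi
      have : t + 1 - i - 1 = (t - i - 1) + 1 := by omega
      rw [this, pow_succ]
      ring
    rw [Finset.sum_congr rfl h1, ← Finset.mul_sum, ih, sum_C2]
    have ht : t + 1 - t - 1 = 0 := by omega
    rw [ht]
    have h2 : ((2 ^ t : ℕ) : ℝ) = (2 : ℝ) ^ t := by push_cast; ring
    rw [h2]
    have e4 : (2 : ℝ) ^ (4 * (t + 1)) = 16 * ((2:ℝ)^t)^4 := by
      rw [show 4*(t+1) = t*4+4 by ring, pow_add, ← pow_mul]; ring
    have e3 : (2 : ℝ) ^ (3 * (t + 1)) = 8 * ((2:ℝ)^t)^3 := by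
      rw [show 3*(t+1) = t*3+3 by ring, pow_add, ← pow_mul]; ring
    have e2 : (2 : ℝ) ^ (2 * (t + 1)) = 4 * ((2:ℝ)^t)^2 := by
      rw [show 2*(t+1) = t*2+2 by ring, pow_add, ← pow_mul]; ring
    have e1 : (2 : ℝ) ^ (t + 1) = 2 * (2:ℝ)^t := by ring
    have e4' : (2 : ℝ) ^ (4 * t) = ((2:ℝ)^t)^4 := by rw [← pow_mul, mul_comm]
    have e3' : (2 : ℝ) ^ (3 * t) = ((2:ℝ)^t)^3 := by rw [← pow_mul, mul_comm]
    have e2' : (2 : ℝ) ^ (2 * t) = ((2:ℝ)^t)^2 := by rw [← pow_mul, mul_comm]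
    rw [e4, e3, e2, e1, e4', e3', e2']
    ring
end

section
/- For every natural number $t \ge 0$ and every real number $x$, the following identity holds: $\sum_{i=0}^{t-1} 16^{t-i-1}\sum_{j=1}^{2^i} C_2\!\left(2^i x + 2^i - 1\right) = 2^{4t}\left(\frac{x^2}{16} + \frac{1}{112}\right) - 2^{3t}\left(\frac{x^2}{16} + \frac{x}{8} + \frac{1}{16}\right) + 2^{2t}\left(\frac{x}{8} + \frac{1}{8}\right) - 2^{t}\,\frac{1}{14}$. -/
/-- Closed form for `B₍₁,₁₎(x)`:
`∑_{i=0}^{t-1} 16^{t-i-1} ∑_{j=1}^{2^i} C₂(2^i x + 2^i - 1)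
  = 2^{4t} (x²/16 + 1/112) - 2^{3t} (x²/16 + x/8 + 1/16)
    + 2^{2t} (x/8 + 1/8) - 2^t / 14`. -/
theorem closed_form_B11 (t : ℕ) (x : ℝ) :
    ∑ i ∈ Finset.range t, (16 : ℝ) ^ (t - i - 1) *
        ∑ j ∈ Finset.Icc 1 (2 ^ i), C2 ((2 : ℝ) ^ i * x + (2 : ℝ) ^ i - 1)
      = 2 ^ (4 * t) * (x ^ 2 / 16 + 1 / 112)
        - 2 ^ (3 * t) * (x ^ 2 / 16 + x / 8 + 1 / 16)
        + 2 ^ (2 * t) * (x / 8 + 1 / 8) - 2 ^ t * (1 / 14) := by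
  have inner : ∀ i : ℕ, ∑ j ∈ Finset.Icc 1 (2 ^ i), C2 ((2 : ℝ) ^ i * x + (2 : ℝ) ^ i - 1)
      = (2 : ℝ) ^ i * C2 ((2 : ℝ) ^ i * x + (2 : ℝ) ^ i - 1) := by
    intro i
    rw [Finset.sum_const, Nat.card_Icc, nsmul_eq_mul]
    push_cast
    ring
  induction t with
  | zero => simp; ring_nf
  | succ t ih =>
    rw [Finset.sum_range_succ]
    have step : ∀ i ∈ Finset.range t,
        (16 : ℝ) ^ (t + 1 - i - 1) *
          ∑ j ∈ Finset.Icc 1 (2 ^ i), C2 ((2 : ℝ) ^ i * x + (2 : ℝ) ^ i - 1)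
        = 16 * ((16 : ℝ) ^ (t - i - 1) *
          ∑ j ∈ Finset.Icc 1 (2 ^ i), C2 ((2 : ℝ) ^ i * x + (2 : ℝ) ^ i - 1)) := by
      intro i hi
      rw [Finset.mem_range] at hi
      have : t + 1 - i - 1 = (t - i - 1) + 1 := by omega
      rw [this, pow_succ]
      ring
    rw [Finset.sum_congr rfl step, ← Finset.mul_sum, ih, inner t]
    have h0 : (16 : ℝ) ^ (t + 1 - t - 1) = 1 := by
      have : t + 1 - t - 1 = 0 := by omega
      rw [this, pow_zero]
    rw [h0]
    simp only [one_mul, C2]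
    have e4 : (2 : ℝ) ^ (4 * (t + 1)) = 16 * 2 ^ (4 * t) := by
      rw [Nat.mul_succ, pow_add]; norm_num; ring
    have e3 : (2 : ℝ) ^ (3 * (t + 1)) = 8 * 2 ^ (3 * t) := by
      rw [Nat.mul_succ, pow_add]; norm_num; ring
    have e2 : (2 : ℝ) ^ (2 * (t + 1)) = 4 * 2 ^ (2 * t) := by
      rw [Nat.mul_succ, pow_add]; norm_num; ring
    have e1 : (2 : ℝ) ^ (t + 1) = 2 * 2 ^ t := by rw [pow_succ]; ring
    have h4 : (2 : ℝ) ^ (4 * t) = ((2:ℝ) ^ t) ^ 4 := by rw [pow_mul']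
    have h3 : (2 : ℝ) ^ (3 * t) = ((2:ℝ) ^ t) ^ 3 := by rw [pow_mul']
    have h2 : (2 : ℝ) ^ (2 * t) = ((2:ℝ) ^ t) ^ 2 := by rw [pow_mul']
    rw [e4, e3, e2, e1, h4, h3, h2]
    ring
end

section
/- For every natural number $t \ge 0$ and every real number $x$, the following identity holds: $\sum_{i=0}^{t-1} 16^{t-i-1}\sum_{j=1}^{2^i} C_2\!\left(2^i x + 2^{i+1} - j - 1\right) = 2^{4t}\left(\frac{x^2}{16} + \frac{x}{48} + \frac{3}{112}\right) - 2^{3t}\left(\frac{x^2}{16} + \frac{3x}{16} + \frac{7}{48}\right) + 2^{2t}\left(\frac{x}{6} + \frac{1}{4}\right) - 2^{t}\,\frac{11}{84}$. -/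
lemma inner_sum_C2 (n : ℕ) (c : ℝ) :
    ∑ j ∈ Finset.Icc (1 : ℕ) n, C2 (c - (j : ℝ)) =
      c * (c - 1) * (c - 2) / 6 - (c - n) * (c - n - 1) * (c - n - 2) / 6 := by
  induction n with
  | zero => simp
  | succ n ih =>
      rw [Finset.sum_Icc_succ_top (by omega : (1:ℕ) ≤ n + 1), ih]
      push_cast
      unfold C2
      ring

/-- Closed form for `B₍₂,₁₎(x)`:
`∑_{i=0}^{t-1} 16^{t-i-1} ∑_{j=1}^{2^i} C₂(2^i x + 2^{i+1} - j - 1)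
  = 2^{4t} (x²/16 + x/48 + 3/112) - 2^{3t} (x²/16 + 3x/16 + 7/48)
    + 2^{2t} (x/6 + 1/4) - 2^t · 11/84`. -/
theorem closed_form_B21 (t : ℕ) (x : ℝ) :
    ∑ i ∈ Finset.range t, (16 : ℝ) ^ (t - i - 1) *
        ∑ j ∈ Finset.Icc (1 : ℕ) (2 ^ i),
          C2 ((2 : ℝ) ^ i * x + (2 : ℝ) ^ (i + 1) - (j : ℝ) - 1)
      = 2 ^ (4 * t) * (x ^ 2 / 16 + x / 48 + 3 / 112)
        - 2 ^ (3 * t) * (x ^ 2 / 16 + 3 * x / 16 + 7 / 48)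
        + 2 ^ (2 * t) * (x / 6 + 1 / 4) - 2 ^ t * (11 / 84) := by
  have key : ∀ i : ℕ, ∑ j ∈ Finset.Icc (1 : ℕ) (2 ^ i),
      C2 ((2 : ℝ) ^ i * x + (2 : ℝ) ^ (i + 1) - (j : ℝ) - 1) =
      ((2:ℝ)^i * x + (2:ℝ)^(i+1) - 1) * ((2:ℝ)^i * x + (2:ℝ)^(i+1) - 2) *
        ((2:ℝ)^i * x + (2:ℝ)^(i+1) - 3) / 6 -
      ((2:ℝ)^i * x + (2:ℝ)^(i+1) - 1 - (2:ℝ)^i) *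
        ((2:ℝ)^i * x + (2:ℝ)^(i+1) - 2 - (2:ℝ)^i) *
        ((2:ℝ)^i * x + (2:ℝ)^(i+1) - 3 - (2:ℝ)^i) / 6 := by
    intro i
    have h := inner_sum_C2 (2 ^ i) ((2 : ℝ) ^ i * x + (2 : ℝ) ^ (i + 1) - 1)
    push_cast at h
    have hs : ∑ j ∈ Finset.Icc (1 : ℕ) (2 ^ i),
        C2 ((2 : ℝ) ^ i * x + (2 : ℝ) ^ (i + 1) - (j : ℝ) - 1) =
        ∑ j ∈ Finset.Icc (1 : ℕ) (2 ^ i),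
        C2 ((2 : ℝ) ^ i * x + (2 : ℝ) ^ (i + 1) - 1 - (j : ℝ)) :=
      Finset.sum_congr rfl (fun j _ => by ring_nf)
    rw [hs, h]
    ring
  induction t with
  | zero => simp; ring
  | succ t ih =>
      rw [Finset.sum_range_succ]
      have hsub : ∀ i ∈ Finset.range t,
          (16 : ℝ) ^ (t + 1 - i - 1) *
            (∑ j ∈ Finset.Icc (1 : ℕ) (2 ^ i),
              C2 ((2 : ℝ) ^ i * x + (2 : ℝ) ^ (i + 1) - (j : ℝ) - 1)) =
          16 * ((16 : ℝ) ^ (t - i - 1) *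
            ∑ j ∈ Finset.Icc (1 : ℕ) (2 ^ i),
              C2 ((2 : ℝ) ^ i * x + (2 : ℝ) ^ (i + 1) - (j : ℝ) - 1)) := by
        intro i hi
        rw [Finset.mem_range] at hi
        have : t + 1 - i - 1 = (t - i - 1) + 1 := by omega
        rw [this, pow_succ]
        ring
      rw [Finset.sum_congr rfl hsub, ← Finset.mul_sum, ih, key t]
      have h0 : t + 1 - t - 1 = 0 := by omega
      rw [h0, pow_zero]
      have h1 : (2 : ℝ) ^ (t + 1) = 2 * 2 ^ t := by rw [pow_succ]; ring
      have h2 : ∀ k : ℕ, (2 : ℝ) ^ (k * (t + 1)) = ((2:ℝ) ^ (t+1)) ^ k := by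
        intro k; rw [← pow_mul, mul_comm]
      have h3 : ∀ k : ℕ, (2 : ℝ) ^ (k * t) = ((2:ℝ) ^ t) ^ k := by
        intro k; rw [← pow_mul, mul_comm]
      rw [h2 4, h2 3, h2 2, h3 4, h3 3, h3 2, h1]
      ring
end
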